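/- arXiv:1011.0796 — 2 statements merged into one kernel-verified Lean document; each statement's English description precedes it below -/
import Mathlib

section
/- Two trees T and T′ are cospectral with respect to the Laplacian matrix if and only if their line graphs L(T) and L(T′) are cospectral with respect to the adjacency matrix. -/
open SimpleGraph

/-- Characteristic polynomial of the Laplacian matrix `L(G) = D(G) - A(G)` of a finite
graph `G`; two graphs are Laplacian-cospectral iff these polynomials coincide. -/
noncomputable def lapCharpoly {V : Type*} [Fintype V] [DecidableEq V] (G : SimpleGraph V) :
    Polynomial ℝ :=
  letI := Classical.decRel G.Adj
  (G.lapMatrix ℝ).charpoly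

/-- Characteristic polynomial of the adjacency matrix of a finite graph `G`; two graphs are
adjacency-cospectral iff these polynomials coincide. -/
noncomputable def adjCharpoly {V : Type*} [Fintype V] [DecidableEq V] (G : SimpleGraph V) :
    Polynomial ℝ :=
  letI := Classical.decRel G.Adj
  (G.adjMatrix ℝ).charpoly

namespace TreeCospectralAux

open Polynomial Matrix Finset

/-! ### Bipartite sign function on a tree -/

lemma path_length_eq_dist {V : Type*} {G : SimpleGraph V} (hG : G.IsTree) {a b : V}
    (q : G.Walk a b) (hq : q.IsPath) : q.length = G.dist a b := by
  obtain ⟨p, hp, hl⟩ := hG.isConnected.exists_path_of_dist a b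
  rw [(hG.existsUnique_path a b).unique hq hp, hl]

lemma dist_adj {V : Type*} [DecidableEq V] {G : SimpleGraph V} (hG : G.IsTree) (r : V) {u v : V}
    (h : G.Adj u v) :
    G.dist r v = G.dist r u + 1 ∨ G.dist r u = G.dist r v + 1 := by
  obtain ⟨p, hp, hl⟩ := hG.isConnected.exists_path_of_dist r u
  by_cases hv : v ∈ p.support
  · right
    have hq : (p.takeUntil v hv).IsPath := hp.takeUntil hv
    have hd : (p.dropUntil v hv).IsPath := hp.dropUntil hv
    have hone : (p.dropUntil v hv) = SimpleGraph.Walk.cons h.symm SimpleGraph.Walk.nil := by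
      refine (hG.existsUnique_path v u).unique hd ?_
      rw [SimpleGraph.Walk.cons_isPath_iff]
      simp [h.ne']
    have hspec := SimpleGraph.Walk.take_spec p hv
    have hlen : (p.takeUntil v hv).length + (p.dropUntil v hv).length = p.length := by
      rw [← SimpleGraph.Walk.length_append, hspec]
    rw [hone] at hlen
    simp only [SimpleGraph.Walk.length_cons, SimpleGraph.Walk.length_nil, zero_add] at hlen
    rw [← hl, ← path_length_eq_dist hG _ hq]
    omega
  · left
    have hq : ((SimpleGraph.Walk.cons h.symm p.reverse).reverse).IsPath := by
      apply SimpleGraph.Walk.IsPath.reverse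
      rw [SimpleGraph.Walk.cons_isPath_iff]
      exact ⟨hp.reverse, by simpa using hv⟩
    have := path_length_eq_dist hG _ hq
    simp only [SimpleGraph.Walk.length_reverse, SimpleGraph.Walk.length_cons] at this
    omega

lemma exists_sign {V : Type*} [DecidableEq V] {G : SimpleGraph V} (hG : G.IsTree) :
    ∃ s : V → ℝ, (∀ v, s v * s v = 1) ∧ ∀ u v, G.Adj u v → s u * s v = -1 := by
  obtain ⟨r⟩ := hG.isConnected.nonempty
  refine ⟨fun v => (-1 : ℝ) ^ (G.dist r v), fun v => ?_, fun u v h => ?_⟩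
  · rw [← pow_add]
    exact Even.neg_one_pow ⟨G.dist r v, by ring⟩
  · rw [← pow_add]
    refine Odd.neg_one_pow ?_
    rcases dist_adj hG r h with h' | h'
    · exact ⟨G.dist r u, by omega⟩
    · exact ⟨G.dist r v, by omega⟩

/-! ### Polynomial lemmas -/

/-- Charpoly of `c • 1 + N` is the charpoly of `N` composed with `X - c`. -/
lemma charpoly_smul_one_add {n : Type*} [Fintype n] [DecidableEq n] (c : ℝ)
    (N : Matrix n n ℝ) :
    (c • (1 : Matrix n n ℝ) + N).charpoly = N.charpoly.comp (X - C c) := by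
  let φ : ℝ[X] →+* ℝ[X] := eval₂RingHom (C : ℝ →+* ℝ[X]) (X - C c)
  have hmap : (charmatrix N).map φ = charmatrix (c • (1 : Matrix n n ℝ) + N) := by
    ext i j
    by_cases h : i = j
    · subst h
      simp only [Matrix.map_apply, charmatrix_apply_eq, map_sub, Matrix.add_apply,
        Matrix.smul_apply, Matrix.one_apply_eq, smul_eq_mul, mul_one, C_add]
      simp [φ, coe_eval₂RingHom]
      ring
    · simp only [Matrix.map_apply, charmatrix_apply_ne _ _ _ h, Matrix.add_apply,
        Matrix.smul_apply, Matrix.one_apply_ne h, smul_eq_mul, mul_zero, zero_add, map_neg]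
      simp [φ, coe_eval₂RingHom]
  have hcomp : N.charpoly.comp (X - C c) = φ N.charpoly := rfl
  rw [hcomp, Matrix.charpoly, Matrix.charpoly, RingHom.map_det, RingHom.mapMatrix_apply, hmap]

/-- Rectangular "AB vs BA" charpoly identity when `card m = card n + 1`. -/
lemma charpoly_mul_comm_rect {m n : Type*} [Fintype m] [Fintype n] [DecidableEq m]
    [DecidableEq n] (h : Fintype.card m = Fintype.card n + 1)
    (A : Matrix m n ℝ) (B : Matrix n m ℝ) :
    (A * B).charpoly = X * (B * A).charpoly := by
  have hrev : (A * B).charpoly.reverse = (B * A).charpoly.reverse := by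
    rw [Matrix.reverse_charpoly, Matrix.reverse_charpoly]
    unfold Matrix.charpolyRev
    rw [Matrix.map_mul (f := (C : ℝ →+* ℝ[X])), Matrix.map_mul (f := (C : ℝ →+* ℝ[X]))]
    calc det (1 - (X : ℝ[X]) • (A.map C * B.map C))
        = det (1 + (-((X : ℝ[X]) • A.map C)) * B.map C) := by
          rw [← Matrix.smul_mul, sub_eq_add_neg, ← Matrix.neg_mul]
      _ = det (1 + B.map C * (-((X : ℝ[X]) • A.map C))) := det_one_add_mul_comm _ _
      _ = det (1 - (X : ℝ[X]) • (B.map C * A.map C)) := by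
          rw [Matrix.mul_neg, Matrix.mul_smul, ← sub_eq_add_neg]
  set p := (A * B).charpoly with hp
  set q := (B * A).charpoly with hq
  have hpd : p.natDegree = Fintype.card m := Matrix.charpoly_natDegree_eq_dim _
  have hqd : q.natDegree = Fintype.card n := Matrix.charpoly_natDegree_eq_dim _
  ext k
  cases k with
  | zero =>
    have h1 : p.coeff 0 = p.reverse.coeff (Fintype.card m) := by
      rw [coeff_reverse, hpd, revAt_le le_rfl, Nat.sub_self]
    have h2 : q.reverse.coeff (Fintype.card m) = 0 := by
      rw [coeff_reverse, hqd, revAt_eq_self_of_lt (by omega)]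
      exact coeff_eq_zero_of_natDegree_lt (by omega)
    rw [mul_coeff_zero, coeff_X_zero, zero_mul, h1, hrev, h2]
  | succ k =>
    rw [coeff_X_mul]
    by_cases hk : k ≤ Fintype.card n
    · have h1 : p.coeff (k + 1) = p.reverse.coeff (Fintype.card m - (k + 1)) := by
        rw [coeff_reverse, hpd, revAt_le (by omega), Nat.sub_sub_self (by omega)]
      have h2 : q.coeff k = q.reverse.coeff (Fintype.card n - k) := by
        rw [coeff_reverse, hqd, revAt_le (by omega), Nat.sub_sub_self (by omega)]
      rw [h1, h2, hrev]
      congr 1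
      omega
    · rw [coeff_eq_zero_of_natDegree_lt (by omega), coeff_eq_zero_of_natDegree_lt (by omega)]

/-! ### Incidence matrix lemmas -/

variable {V : Type*} [Fintype V] [DecidableEq V] (G : SimpleGraph V) [DecidableRel G.Adj]

/-- The incidence matrix with columns indexed by the edge set. -/
noncomputable def eM : Matrix V G.edgeSet ℝ := fun v e => G.incMatrix ℝ v ↑e

lemma eM_mul_transpose :
    eM G * (eM G)ᵀ = fun a b =>
      if a = b then (G.degree a : ℝ) else if G.Adj a b then 1 else 0 := by
  have key : eM G * (eM G)ᵀ = G.incMatrix ℝ * (G.incMatrix ℝ)ᵀ := by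
    ext a b
    rw [Matrix.mul_apply, Matrix.mul_apply]
    simp only [eM, Matrix.transpose_apply]
    rw [Finset.sum_set_coe (f := fun e => G.incMatrix ℝ a e * G.incMatrix ℝ b e)]
    refine Finset.sum_subset (Finset.subset_univ _) fun e _ he => ?_
    rw [G.incMatrix_of_notMem_incidenceSet
      (fun hmem => he (Set.mem_toFinset.mpr hmem.1)), zero_mul]
  rw [key, SimpleGraph.incMatrix_mul_transpose]
  rfl

lemma incMatrix_edge_apply (z : G.edgeSet) (v : V) :
    G.incMatrix ℝ v ↑z = if v ∈ (↑z : Sym2 V) then 1 else 0 := by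
  rw [SimpleGraph.incMatrix_apply']
  congr 1
  simp only [eq_iff_iff, SimpleGraph.incidenceSet, Set.mem_setOf_eq]
  exact ⟨fun h => h.2, fun h => ⟨z.2, h⟩⟩

lemma transpose_eM_mul [DecidableRel G.lineGraph.Adj] :
    (eM G)ᵀ * eM G =
      (2 : ℝ) • (1 : Matrix G.edgeSet G.edgeSet ℝ) + (G.lineGraph).adjMatrix ℝ := by
  ext e f
  by_cases hef : e = f
  · subst hef
    have : ((eM G)ᵀ * eM G) e e = ((G.incMatrix ℝ)ᵀ * G.incMatrix ℝ) (↑e) (↑e) := by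
      simp [Matrix.mul_apply, eM]
    rw [this, SimpleGraph.incMatrix_transpose_mul_diag, if_pos e.2]
    simp [Matrix.one_apply_eq, SimpleGraph.adjMatrix_apply, (G.lineGraph).irrefl]
  · have hterm : ∀ v : V, (eM G)ᵀ e v * eM G v f
        = if v ∈ (↑e : Sym2 V) ∧ v ∈ (↑f : Sym2 V) then (1 : ℝ) else 0 := by
      intro v
      rw [Matrix.transpose_apply]
      unfold eM
      rw [incMatrix_edge_apply, incMatrix_edge_apply, ite_zero_mul_ite_zero, one_mul]
    rw [Matrix.mul_apply]
    simp only [hterm]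
    rw [Finset.sum_boole]
    have hrhs : ((2 : ℝ) • (1 : Matrix G.edgeSet G.edgeSet ℝ)
        + (G.lineGraph).adjMatrix ℝ) e f
        = if (G.lineGraph).Adj e f then 1 else 0 := by
      simp [Matrix.one_apply_ne hef]
    rw [hrhs]
    by_cases hadj : (G.lineGraph).Adj e f
    · obtain ⟨-, v0, hv0e, hv0f⟩ := SimpleGraph.lineGraph_adj_iff_exists.mp hadj
      rw [if_pos hadj]
      have : Finset.filter (fun v => v ∈ (↑e : Sym2 V) ∧ v ∈ (↑f : Sym2 V)) Finset.univ
          = {v0} := by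
        ext v
        simp only [Finset.mem_filter, Finset.mem_univ, true_and, Finset.mem_singleton]
        constructor
        · rintro ⟨hve, hvf⟩
          by_contra hne
          exact hef (Subtype.ext (Sym2.eq_of_ne_mem hne hve hv0e hvf hv0f))
        · rintro rfl; exact ⟨hv0e, hv0f⟩
      rw [this]
      simp
    · rw [if_neg hadj]
      have : Finset.filter (fun v => v ∈ (↑e : Sym2 V) ∧ v ∈ (↑f : Sym2 V)) Finset.univ
          = ∅ := by
        ext v
        simp only [Finset.mem_filter, Finset.mem_univ, true_and, Finset.notMem_empty,
          iff_false, not_and]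
        intro hve hvf
        exact hadj (SimpleGraph.lineGraph_adj_iff_exists.mpr ⟨hef, v, hve, hvf⟩)
      rw [this]
      simp

/-! ### Instance-irrelevance for the charpoly definitions -/

lemma lapCharpoly_eq : lapCharpoly G = (G.lapMatrix ℝ).charpoly := by
  unfold lapCharpoly
  congr!

lemma adjCharpoly_eq {W : Type*} [Fintype W] [DecidableEq W] (H : SimpleGraph W)
    [DecidableRel H.Adj] : adjCharpoly H = (H.adjMatrix ℝ).charpoly := by
  unfold adjCharpoly
  congr!

/-! ### The key factorization -/

lemma key (hT : G.IsTree) :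
    lapCharpoly G = X * ((adjCharpoly G.lineGraph).comp (X - C 2)) := by
  classical
  obtain ⟨s, hs1, hs2⟩ := exists_sign hT
  set S : Matrix V V ℝ := Matrix.diagonal s with hS
  set B : Matrix V G.edgeSet ℝ := S * eM G with hB
  have hSS : S * S = 1 := by
    rw [hS, Matrix.diagonal_mul_diagonal]
    have hfun : (fun i => s i * s i) = fun _ : V => (1 : ℝ) := funext hs1
    rw [hfun, Matrix.diagonal_one]
  have hST : Sᵀ = S := by rw [hS, Matrix.diagonal_transpose]
  have hBBT : B * Bᵀ = G.lapMatrix ℝ := by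
    have hassoc : B * Bᵀ = S * (eM G * (eM G)ᵀ) * S := by
      rw [hB, Matrix.transpose_mul, hST, ← Matrix.mul_assoc, Matrix.mul_assoc (S * eM G)]
      rw [Matrix.mul_assoc S (eM G), Matrix.mul_assoc S, ← Matrix.mul_assoc (eM G)]
    rw [hassoc, eM_mul_transpose]
    ext a b
    rw [Matrix.mul_diagonal]
    change (S * Matrix.of (fun a b => if a = b then (G.degree a : ℝ) else if G.Adj a b then 1 else 0)) a b * s b = _
    rw [Matrix.diagonal_mul, Matrix.of_apply]
    rw [SimpleGraph.lapMatrix, Matrix.sub_apply, SimpleGraph.degMatrix,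
      SimpleGraph.adjMatrix_apply]
    by_cases hab : a = b
    · subst hab
      rw [if_pos rfl, Matrix.diagonal_apply_eq, if_neg (G.irrefl),
        show s a * (G.degree a : ℝ) * s a = (G.degree a : ℝ) * (s a * s a) from by ring,
        hs1 a, mul_one, sub_zero]
    · rw [if_neg hab, Matrix.diagonal_apply_ne _ hab]
      by_cases hadj : G.Adj a b
      · rw [if_pos hadj, mul_one, hs2 a b hadj]
        norm_num
      · rw [if_neg hadj, mul_zero, zero_mul, sub_zero]
  have hBTB : Bᵀ * B = (2 : ℝ) • (1 : Matrix G.edgeSet G.edgeSet ℝ)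
      + (G.lineGraph).adjMatrix ℝ := by
    rw [hB, Matrix.transpose_mul, hST, Matrix.mul_assoc, ← Matrix.mul_assoc S,
      hSS, Matrix.one_mul, ← transpose_eM_mul]
  have hcard : Fintype.card V = Fintype.card G.edgeSet + 1 := by
    have h1 := hT.card_edgeFinset
    have h2 : Fintype.card G.edgeSet = G.edgeFinset.card := (Set.toFinset_card _).symm
    omega
  rw [lapCharpoly_eq, adjCharpoly_eq, ← hBBT, charpoly_mul_comm_rect hcard, hBTB,
    charpoly_smul_one_add]

end TreeCospectralAux

/-- Two trees are Laplacian-cospectral if and only if their line graphs are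
adjacency-cospectral. -/
theorem tree_lap_cospectral_iff_lineGraph_adj_cospectral
    {V V' : Type*} [Fintype V] [DecidableEq V] [Fintype V'] [DecidableEq V']
    (T : SimpleGraph V) (T' : SimpleGraph V')
    [DecidableRel T.Adj] [DecidableRel T'.Adj]
    (hT : T.IsTree) (hT' : T'.IsTree) :
    lapCharpoly T = lapCharpoly T' ↔ adjCharpoly T.lineGraph = adjCharpoly T'.lineGraph := by
  open Polynomial in
  constructor
  · intro h
    rw [TreeCospectralAux.key T hT, TreeCospectralAux.key T' hT'] at h
    have h2 := mul_left_cancel₀ (Polynomial.X_ne_zero (R := ℝ)) h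
    have h3 := congrArg (fun r : Polynomial ℝ => r.comp (X + C 2)) h2
    simpa [Polynomial.comp_assoc, Polynomial.sub_comp, Polynomial.X_comp, Polynomial.C_comp,
      add_sub_cancel_right, Polynomial.comp_X] using h3
  · intro h
    rw [TreeCospectralAux.key T hT, TreeCospectralAux.key T' hT', h]
end

section
/- Let G and H be connected graphs whose line graphs are isomorphic, and suppose it is not the case that one of G, H is the triangle K₃ and the other is the star K_{1,3}. Then G and H are isomorphic. -/
open SimpleGraph

namespace WhitneyAux

variable {V W : Type*}

/-- vertex has at least two distinct edges -/
def TwoDeg (G : SimpleGraph V) (v : V) : Prop :=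
  ∃ e f : G.edgeSet, e ≠ f ∧ v ∈ (e : Sym2 V) ∧ v ∈ (f : Sym2 V)

/-- some star of size 3 maps to a triangle -/
def StarTri {G : SimpleGraph V} {H : SimpleGraph W} (φ : G.lineGraph ≃g H.lineGraph) : Prop :=
  ∃ (v : V) (e₁ e₂ e₃ : G.edgeSet), v ∈ (e₁ : Sym2 V) ∧ v ∈ (e₂ : Sym2 V) ∧ v ∈ (e₃ : Sym2 V) ∧
    e₁ ≠ e₂ ∧ e₁ ≠ e₃ ∧ e₂ ≠ e₃ ∧
    ¬ ∃ x : W, x ∈ (↑(φ e₁) : Sym2 W) ∧ x ∈ (↑(φ e₂) : Sym2 W) ∧ x ∈ (↑(φ e₃) : Sym2 W)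

variable {G : SimpleGraph V} {H : SimpleGraph W}

lemma edge_nd (e : G.edgeSet) : ¬ (e : Sym2 V).IsDiag := G.not_isDiag_of_mem_edgeSet e.2

lemma unique_shared {e f : G.edgeSet} (h : e ≠ f) {x y : V} (hx1 : x ∈ (e:Sym2 V))
    (hy1 : y ∈ (e:Sym2 V)) (hx2 : x ∈ (f:Sym2 V)) (hy2 : y ∈ (f:Sym2 V)) : x = y := by
  by_contra hxy
  exact h (Subtype.ext (((Sym2.mem_and_mem_iff hxy).1 ⟨hx1, hy1⟩).trans
    (((Sym2.mem_and_mem_iff hxy).1 ⟨hx2, hy2⟩)).symm))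

lemma eq_sym2_of_mem {e : G.edgeSet} {x y : V} (hxy : x ≠ y) (hx : x ∈ (e:Sym2 V))
    (hy : y ∈ (e:Sym2 V)) : (e : Sym2 V) = s(x, y) :=
  (Sym2.mem_and_mem_iff hxy).1 ⟨hx, hy⟩

lemma mem_other {e : G.edgeSet} {x : V} (hx : x ∈ (e:Sym2 V)) :
    ∃ y, y ≠ x ∧ y ∈ (e:Sym2 V) ∧ (e : Sym2 V) = s(x, y) :=
  ⟨Sym2.Mem.other hx, Sym2.other_ne (edge_nd e) hx, Sym2.other_mem hx, (Sym2.other_spec hx).symm⟩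

lemma phi_adj (φ : G.lineGraph ≃g H.lineGraph) {e f : G.edgeSet} (h : e ≠ f)
    {v : V} (hv : v ∈ (e : Sym2 V)) (hv' : v ∈ (f : Sym2 V)) :
    φ e ≠ φ f ∧ ∃ x, x ∈ (↑(φ e) : Sym2 W) ∧ x ∈ (↑(φ f) : Sym2 W) :=
  lineGraph_adj_iff_exists.1 (φ.map_adj_iff.2 (lineGraph_adj_iff_exists.2 ⟨h, v, hv, hv'⟩))

lemma phi_nadj (φ : G.lineGraph ≃g H.lineGraph) {e f : G.edgeSet} (h : e ≠ f)
    (hv : ¬ ∃ v, v ∈ (e : Sym2 V) ∧ v ∈ (f : Sym2 V)) :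
    ¬ ∃ x, x ∈ (↑(φ e) : Sym2 W) ∧ x ∈ (↑(φ f) : Sym2 W) := by
  intro hx
  have hne : φ e ≠ φ f := fun hc => h (φ.toEquiv.injective hc)
  exact hv (lineGraph_adj_iff_exists.1 (φ.map_adj_iff.1
    (lineGraph_adj_iff_exists.2 ⟨hne, hx⟩))).2

lemma exists_mem_sym2 (z : Sym2 V) : ∃ x, x ∈ z := by
  induction z using Sym2.ind with | _ x y => exact ⟨x, Sym2.mem_mk_left x y⟩

lemma closure (hG : G.Connected) (X : Set V) (hX : ∀ ⦃x y⦄, G.Adj x y → x ∈ X → y ∈ X)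
    {v₀ : V} (h0 : v₀ ∈ X) : ∀ x, x ∈ X := by
  have key : ∀ {u x : V} (_ : G.Walk u x), u ∈ X → x ∈ X := by
    intro u x p
    induction p with
    | nil => exact id
    | cons h p ih => exact fun hu => ih (hX h hu)
  intro x
  obtain ⟨p⟩ := hG.preconnected v₀ x
  exact key p h0

/-- every vertex of a connected graph with at least 2 edges lies on an edge -/
lemma exists_edge_at (hG : G.Connected) (h2 : ∃ e f : G.edgeSet, e ≠ f) (v : V) :
    ∃ e : G.edgeSet, v ∈ (e : Sym2 V) := by
  by_contra hv
  push_neg at hv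
  obtain ⟨e, f, hef⟩ := h2
  obtain ⟨x, hx⟩ := exists_mem_sym2 (e : Sym2 V)
  have hxv : x ≠ v := fun h => hv e (h ▸ hx)
  have := closure hG {y | y ≠ v} (fun a b hab (ha : a ≠ v) => by
    intro hb
    subst hb
    exact hv ⟨s(a, b), hab⟩ (Sym2.mem_mk_right a b)) hxv v
  exact this rfl

/-- the neighbour of a pendant vertex has two edges (when G has ≥ 2 edges) -/
lemma nbr_twoDeg (hG : G.Connected) (h2 : ∃ e f : G.edgeSet, e ≠ f)
    {v : V} (hv : ¬ TwoDeg G v) {e : G.edgeSet} {u : V} (hve : v ∈ (e : Sym2 V))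
    (hue : u ∈ (e : Sym2 V)) (huv : u ≠ v) : TwoDeg G u := by
  by_contra hu
  have he : (e : Sym2 V) = s(u, v) := eq_sym2_of_mem huv hue hve
  have hcl : ∀ x, x ∈ ({u, v} : Set V) := by
    refine closure hG _ (fun a b hab ha => ?_) (Set.mem_insert u {v})
    have hfe : (⟨s(a,b), hab⟩ : G.edgeSet) = e := by
      rcases ha with ha | ha
      · subst ha
        by_contra hne
        exact hu ⟨⟨s(a,b), hab⟩, e, hne, Sym2.mem_mk_left a b, hue⟩
      · rw [Set.mem_singleton_iff] at ha
        subst ha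
        by_contra hne
        exact hv ⟨⟨s(a,b), hab⟩, e, hne, Sym2.mem_mk_left a b, hve⟩
    have : b ∈ (e : Sym2 V) := by
      rw [← hfe]; exact Sym2.mem_mk_right a b
    rw [he, Sym2.mem_iff] at this
    rcases this with h | h
    · exact Or.inl h
    · exact Or.inr h
  obtain ⟨f₁, g₁, hfg1⟩ := h2
  -- every edge equals e, contradiction
  have hall : ∀ f : G.edgeSet, f = e := by
    intro f
    obtain ⟨x, hx⟩ := exists_mem_sym2 (f : Sym2 V)
    obtain ⟨y, hyx, hy, hf⟩ := mem_other hx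
    have hx' := hcl x
    have hy' := hcl y
    apply Subtype.ext
    rw [hf, he]
    rcases hx' with hx' | hx' <;> rcases hy' with hy' | hy' <;>
      simp -failIfUnchanged only [Set.mem_singleton_iff] at * <;> subst hx' <;> subst hy'
    · exact absurd rfl hyx
    · rfl
    · exact Sym2.eq_swap
    · exact absurd rfl hyx
  exact hfg1 ((hall f₁).trans (hall g₁).symm)

section Part2
variable {V W : Type*} {G : SimpleGraph V} {H : SimpleGraph W}

lemma exists_comm (φ : G.lineGraph ≃g H.lineGraph) (hP : ¬ StarTri φ) {v : V}
    (hv : TwoDeg G v) :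
    ∃ x : W, ∀ e : G.edgeSet, v ∈ (e : Sym2 V) → x ∈ (↑(φ e) : Sym2 W) := by
  obtain ⟨e, f, hef, hve, hvf⟩ := hv
  obtain ⟨hne, x, hxe, hxf⟩ := phi_adj φ hef hve hvf
  refine ⟨x, fun g hg => ?_⟩
  by_cases hge : g = e
  · subst hge; exact hxe
  by_cases hgf : g = f
  · subst hgf; exact hxf
  by_contra hxg
  apply hP
  refine ⟨v, e, f, g, hve, hvf, hg, hef, fun h => hge h.symm, fun h => hgf h.symm, ?_⟩
  rintro ⟨y, hye, hyf, hyg⟩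
  exact hxg ((unique_shared hne hye hxe hyf hxf) ▸ hyg)

lemma exists_psi (φ : G.lineGraph ≃g H.lineGraph) (hG : G.Connected) (hH : H.Connected)
    (h2 : ∃ e f : G.edgeSet, e ≠ f) (hP : ¬ StarTri φ) :
    ∃ c : V → W,
      (∀ v, TwoDeg G v → ∀ e : G.edgeSet, v ∈ (e : Sym2 V) → c v ∈ (↑(φ e) : Sym2 W)) ∧
      (∀ v, ¬ TwoDeg G v → ∀ (e : G.edgeSet) (u : V), v ∈ (e : Sym2 V) → u ∈ (e : Sym2 V) →
        u ≠ v → c v ∈ (↑(φ e) : Sym2 W) ∧ c v ≠ c u) := by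
  have hW : Nonempty W := hH.nonempty
  have h0 : ∀ v : V, ∃ x : W, TwoDeg G v →
      ∀ e : G.edgeSet, v ∈ (e : Sym2 V) → x ∈ (↑(φ e) : Sym2 W) := by
    intro v
    by_cases hv : TwoDeg G v
    · obtain ⟨x, hx⟩ := exists_comm φ hP hv
      exact ⟨x, fun _ => hx⟩
    · exact ⟨Classical.choice hW, fun h => absurd h hv⟩
  choose c₀ hc₀ using h0
  have hpend : ∀ v : V, ∃ x : W, ¬ TwoDeg G v → ∀ (e : G.edgeSet) (u : V),
      v ∈ (e : Sym2 V) → u ∈ (e : Sym2 V) → u ≠ v →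
      x ∈ (↑(φ e) : Sym2 W) ∧ x ≠ c₀ u := by
    intro v
    by_cases hv : TwoDeg G v
    · exact ⟨Classical.choice hW, fun h => absurd hv h⟩
    by_cases he : ∃ (e : G.edgeSet) (u : V), v ∈ (e : Sym2 V) ∧ u ∈ (e : Sym2 V) ∧ u ≠ v
    · obtain ⟨e, u, hve, hue, huv⟩ := he
      have hu2 : TwoDeg G u := nbr_twoDeg hG h2 hv hve hue huv
      have hcu : c₀ u ∈ (↑(φ e) : Sym2 W) := hc₀ u hu2 e hue
      obtain ⟨x, hxne, hxmem, _⟩ := mem_other (e := φ e) hcu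
      refine ⟨x, fun _ e' u' hve' hue' huv' => ?_⟩
      have hee : e' = e := by
        by_contra hne
        exact hv ⟨e', e, hne, hve', hve⟩
      subst hee
      have huu : u' = u := by
        by_contra hne
        have h1 : (e' : Sym2 V) = s(u, u') := eq_sym2_of_mem (fun h => hne h.symm) hue hue'
        have h2' : v ∈ s(u, u') := h1 ▸ hve'
        rw [Sym2.mem_iff] at h2'
        rcases h2' with h | h
        · exact huv h.symm
        · exact huv' h.symm
      subst huu
      exact ⟨hxmem, hxne⟩
    · exact ⟨Classical.choice hW, fun _ e u hve hue huv => absurd ⟨e, u, hve, hue, huv⟩ he⟩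
  choose c₁ hc₁ using hpend
  classical
  refine ⟨fun v => if h : TwoDeg G v then c₀ v else c₁ v, ?_, ?_⟩
  · intro v hv e hve
    simp only
    rw [dif_pos hv]
    exact hc₀ v hv e hve
  · intro v hv e u hve hue huv
    simp only
    rw [dif_neg hv, dif_pos (nbr_twoDeg hG h2 hv hve hue huv)]
    exact hc₁ v hv e u hve hue huv

lemma key_lemma (φ : G.lineGraph ≃g H.lineGraph) (hP' : ¬ StarTri φ.symm)
    (hG : G.Connected) (h2 : ∃ e f : G.edgeSet, e ≠ f) {c : V → W}
    (hcT : ∀ v, TwoDeg G v → ∀ e : G.edgeSet, v ∈ (e : Sym2 V) → c v ∈ (↑(φ e) : Sym2 W))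
    (hcP : ∀ v, ¬ TwoDeg G v → ∀ (e : G.edgeSet) (u : V), v ∈ (e : Sym2 V) →
      u ∈ (e : Sym2 V) → u ≠ v → c v ∈ (↑(φ e) : Sym2 W) ∧ c v ≠ c u) :
    ∀ (e : G.edgeSet) (u v : V), (e : Sym2 V) = s(u, v) →
      (↑(φ e) : Sym2 W) = s(c u, c v) := by
  have hne2 : ∀ (e : G.edgeSet) (u v : V), (e : Sym2 V) = s(u, v) → TwoDeg G u →
      TwoDeg G v → c u ≠ c v := by
    intro e u v he hu hv hcc
    have huv : u ≠ v := by
      have := e.2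
      rw [he, mem_edgeSet] at this
      exact this.ne
    have pick : ∀ {w : V}, w ∈ (e : Sym2 V) → TwoDeg G w →
        ∃ f : G.edgeSet, f ≠ e ∧ w ∈ (f : Sym2 V) := by
      rintro w hw ⟨f, g, hfg, hwf, hwg⟩
      by_cases hf : f = e
      · exact ⟨g, by rw [← hf]; exact hfg.symm, hwg⟩
      · exact ⟨f, hf, hwf⟩
    have hmemu : u ∈ (e : Sym2 V) := by rw [he]; exact Sym2.mem_mk_left u v
    have hmemv : v ∈ (e : Sym2 V) := by rw [he]; exact Sym2.mem_mk_right u v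
    obtain ⟨e', he'e, hue'⟩ := pick hmemu hu
    obtain ⟨e'', he''e, hve''⟩ := pick hmemv hv
    have he'e'' : e' ≠ e'' := by
      intro h
      subst h
      exact he'e (Subtype.ext ((eq_sym2_of_mem huv hue' hve'').trans he.symm))
    have hxe : c u ∈ (↑(φ e) : Sym2 W) := hcT u hu e hmemu
    have hxe' : c u ∈ (↑(φ e') : Sym2 W) := hcT u hu e' hue'
    have hxe'' : c u ∈ (↑(φ e'') : Sym2 W) := by
      rw [hcc]; exact hcT v hv e'' hve''
    have hinj : ∀ {a b : G.edgeSet}, a ≠ b → φ a ≠ φ b :=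
      fun h hc => h (φ.toEquiv.injective hc)
    have hcom : ∃ y, y ∈ (↑(φ.symm (φ e)) : Sym2 V) ∧ y ∈ (↑(φ.symm (φ e')) : Sym2 V) ∧
        y ∈ (↑(φ.symm (φ e'')) : Sym2 V) := by
      by_contra h
      exact hP' ⟨c u, φ e, φ e', φ e'', hxe, hxe', hxe'',
        hinj (Ne.symm he'e), hinj (Ne.symm he''e), hinj he'e'', h⟩
    simp only [RelIso.symm_apply_apply] at hcom
    obtain ⟨y, hye, hye', hye''⟩ := hcom
    rw [he, Sym2.mem_iff] at hye
    rcases hye with rfl | rfl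
    · exact he''e (Subtype.ext ((eq_sym2_of_mem huv hye'' hve'').trans he.symm))
    · exact he'e (Subtype.ext ((eq_sym2_of_mem huv hue' hye').trans he.symm))
  intro e u v he
  have huv : u ≠ v := by
    have := e.2
    rw [he, mem_edgeSet] at this
    exact this.ne
  have hmemu : u ∈ (e : Sym2 V) := by rw [he]; exact Sym2.mem_mk_left u v
  have hmemv : v ∈ (e : Sym2 V) := by rw [he]; exact Sym2.mem_mk_right u v
  by_cases hu : TwoDeg G u <;> by_cases hv : TwoDeg G v
  · exact eq_sym2_of_mem (hne2 e u v he hu hv) (hcT u hu e hmemu) (hcT v hv e hmemv)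
  · obtain ⟨h1, h2'⟩ := hcP v hv e u hmemv hmemu huv
    exact eq_sym2_of_mem (fun h => h2' h.symm) (hcT u hu e hmemu) h1
  · obtain ⟨h1, h2'⟩ := hcP u hu e v hmemu hmemv (Ne.symm huv)
    exact eq_sym2_of_mem h2' h1 (hcT v hv e hmemv)
  · exact absurd (nbr_twoDeg hG h2 hv hmemv hmemu huv) hu

lemma inv_comp (φ : G.lineGraph ≃g H.lineGraph) (hG : G.Connected) (hH : H.Connected)
    (h2 : ∃ e f : G.edgeSet, e ≠ f) (hP : ¬ StarTri φ) (hP' : ¬ StarTri φ.symm)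
    {c : V → W} {d : W → V}
    (hcT : ∀ v, TwoDeg G v → ∀ e : G.edgeSet, v ∈ (e : Sym2 V) → c v ∈ (↑(φ e) : Sym2 W))
    (hcP : ∀ v, ¬ TwoDeg G v → ∀ (e : G.edgeSet) (u : V), v ∈ (e : Sym2 V) →
      u ∈ (e : Sym2 V) → u ≠ v → c v ∈ (↑(φ e) : Sym2 W) ∧ c v ≠ c u)
    (hdT : ∀ x, TwoDeg H x → ∀ h : H.edgeSet, x ∈ (h : Sym2 W) →
      d x ∈ (↑(φ.symm h) : Sym2 V))
    (hdP : ∀ x, ¬ TwoDeg H x → ∀ (h : H.edgeSet) (y : W), x ∈ (h : Sym2 W) →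
      y ∈ (h : Sym2 W) → y ≠ x → d x ∈ (↑(φ.symm h) : Sym2 V) ∧ d x ≠ d y) :
    ∀ v, d (c v) = v := by
  have hinj : ∀ {a b : G.edgeSet}, a ≠ b → φ a ≠ φ b :=
    fun h hc => h (φ.toEquiv.injective hc)
  have huniq : ∀ (x : W), TwoDeg H x → ∀ y y' : V,
      (∀ h : H.edgeSet, x ∈ (h : Sym2 W) → y ∈ (↑(φ.symm h) : Sym2 V)) →
      (∀ h : H.edgeSet, x ∈ (h : Sym2 W) → y' ∈ (↑(φ.symm h) : Sym2 V)) → y = y' := by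
    rintro x ⟨h1, h2', hne, hx1, hx2⟩ y y' hy hy'
    have hnesymm : φ.symm h1 ≠ φ.symm h2' := fun h => hne (φ.toEquiv.symm.injective h)
    exact unique_shared hnesymm (hy h1 hx1) (hy' h1 hx1) (hy h2' hx2) (hy' h2' hx2)
  have hTD : ∀ v, TwoDeg G v → d (c v) = v := by
    intro v hv
    have hx2 : TwoDeg H (c v) := by
      obtain ⟨e, f, hef, hve, hvf⟩ := id hv
      exact ⟨φ e, φ f, hinj hef, hcT v hv e hve, hcT v hv f hvf⟩
    have hvprop : ∀ h : H.edgeSet, c v ∈ (h : Sym2 W) → v ∈ (↑(φ.symm h) : Sym2 V) := by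
      intro h hxh
      obtain ⟨e, f, hef, hve, hvf⟩ := id hv
      by_cases h1 : φ.symm h = e
      · rw [h1]; exact hve
      by_cases h2'' : φ.symm h = f
      · rw [h2'']; exact hvf
      have hxe : c v ∈ (↑(φ e) : Sym2 W) := hcT v hv e hve
      have hxf : c v ∈ (↑(φ f) : Sym2 W) := hcT v hv f hvf
      have hne1 : h ≠ φ e := fun hc => h1 (by rw [hc]; simp)
      have hne2 : h ≠ φ f := fun hc => h2'' (by rw [hc]; simp)
      have hcom : ∃ y, y ∈ (↑(φ.symm h) : Sym2 V) ∧ y ∈ (↑(φ.symm (φ e)) : Sym2 V) ∧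
          y ∈ (↑(φ.symm (φ f)) : Sym2 V) := by
        by_contra hcon
        exact hP' ⟨c v, h, φ e, φ f, hxh, hxe, hxf, hne1, hne2, hinj hef, hcon⟩
      simp only [RelIso.symm_apply_apply] at hcom
      obtain ⟨y, hyh, hye, hyf⟩ := hcom
      have : y = v := unique_shared hef hye hve hyf hvf
      exact this ▸ hyh
    exact huniq (c v) hx2 (d (c v)) v (hdT (c v) hx2) hvprop
  intro v
  by_cases hv : TwoDeg G v
  · exact hTD v hv
  obtain ⟨e, hve⟩ := exists_edge_at hG h2 v
  obtain ⟨u, huv, hue, hesym⟩ := mem_other hve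
  have hu2 : TwoDeg G u := nbr_twoDeg hG h2 hv hve hue huv
  obtain ⟨hcv_mem, hcv_ne⟩ := hcP v hv e u hve hue huv
  have hcu_mem : c u ∈ (↑(φ e) : Sym2 W) := hcT u hu2 e hue
  have hφe : (↑(φ e) : Sym2 W) = s(c v, c u) := eq_sym2_of_mem hcv_ne hcv_mem hcu_mem
  by_cases hx2 : TwoDeg H (c v)
  · have hvprop : ∀ h : H.edgeSet, c v ∈ (h : Sym2 W) → v ∈ (↑(φ.symm h) : Sym2 V) := by
      intro h hxh
      by_cases h1 : h = φ e
      · subst h1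
        simpa using hve
      obtain ⟨hne', y, hy1, hy2⟩ := phi_adj φ.symm (e := h) (f := φ e) h1 hxh hcv_mem
      have hy2' : y ∈ (e : Sym2 V) := by simpa using hy2
      rw [hesym, Sym2.mem_iff] at hy2'
      rcases hy2' with rfl | rfl
      · exact hy1
      · -- y = u : contradiction
        exfalso
        have hcuh : c y ∈ (↑(φ (φ.symm h)) : Sym2 W) := hcT y hu2 (φ.symm h) hy1
        rw [RelIso.apply_symm_apply] at hcuh
        have hhh : (h : Sym2 W) = s(c v, c y) := eq_sym2_of_mem hcv_ne hxh hcuh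
        exact h1 (Subtype.ext (hhh.trans hφe.symm))
    exact huniq (c v) hx2 (d (c v)) v (hdT (c v) hx2) hvprop
  · obtain ⟨hd_mem, hd_ne⟩ :=
      hdP (c v) hx2 (φ e) (c u) hcv_mem hcu_mem (fun h => hcv_ne h.symm)
    have hd_mem' : d (c v) ∈ (e : Sym2 V) := by simpa using hd_mem
    rw [hTD u hu2] at hd_ne
    rw [hesym, Sym2.mem_iff] at hd_mem'
    rcases hd_mem' with h | h
    · exact h
    · exact absurd h hd_ne

end Part2

section Part2b
variable {V W : Type*} {G : SimpleGraph V} {H : SimpleGraph W}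

lemma part2 (φ : G.lineGraph ≃g H.lineGraph) (hG : G.Connected) (hH : H.Connected)
    (h2 : ∃ e f : G.edgeSet, e ≠ f) (hP : ¬ StarTri φ) (hP' : ¬ StarTri φ.symm) :
    Nonempty (G ≃g H) := by
  obtain ⟨c, hcT, hcP⟩ := exists_psi φ hG hH h2 hP
  have h2' : ∃ e f : H.edgeSet, e ≠ f := by
    obtain ⟨e, f, hef⟩ := h2
    exact ⟨φ e, φ f, fun h => hef (φ.toEquiv.injective h)⟩
  have hP'' : ¬ StarTri φ.symm.symm := hP
  obtain ⟨d, hdT, hdP⟩ := exists_psi φ.symm hH hG h2' hP'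
  have hdc : ∀ v, d (c v) = v := inv_comp φ hG hH h2 hP hP' hcT hcP hdT hdP
  have hcd : ∀ w, c (d w) = w := inv_comp φ.symm hH hG h2' hP' hP'' hdT hdP hcT hcP
  have hkey := key_lemma φ hP' hG h2 hcT hcP
  have hkey' := key_lemma φ.symm hP'' hH h2' hdT hdP
  refine ⟨⟨⟨c, d, hdc, hcd⟩, @fun u v => ?_⟩⟩
  constructor
  · intro hadj
    have hk := hkey' ⟨s(c u, c v), hadj⟩ (c u) (c v) rfl
    have hmem := (φ.symm ⟨s(c u, c v), hadj⟩).2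
    rw [hk, hdc u, hdc v] at hmem
    exact (G.mem_edgeSet).1 hmem
  · intro hadj
    have hk := hkey ⟨s(u, v), hadj⟩ u v rfl
    have hmem := (φ ⟨s(u, v), hadj⟩).2
    rw [hk] at hmem
    exact (H.mem_edgeSet).1 hmem

end Part2b

section Part3
variable {V W : Type*} {G : SimpleGraph V} {H : SimpleGraph W}

/-- A labelled "star at `v` maps to triangle `a b c`" configuration. -/
structure Config (φ : G.lineGraph ≃g H.lineGraph) (v u₁ u₂ u₃ : V) (a b c : W) : Prop where
  he₁ : s(v, u₁) ∈ G.edgeSet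
  he₂ : s(v, u₂) ∈ G.edgeSet
  he₃ : s(v, u₃) ∈ G.edgeSet
  hu12 : u₁ ≠ u₂
  hu13 : u₁ ≠ u₃
  hu23 : u₂ ≠ u₃
  hab : a ≠ b
  hac : a ≠ c
  hbc : b ≠ c
  ht₁ : (↑(φ ⟨s(v, u₁), he₁⟩) : Sym2 W) = s(a, b)
  ht₂ : (↑(φ ⟨s(v, u₂), he₂⟩) : Sym2 W) = s(b, c)
  ht₃ : (↑(φ ⟨s(v, u₃), he₃⟩) : Sym2 W) = s(a, c)

namespace Config

variable {φ : G.lineGraph ≃g H.lineGraph} {v u₁ u₂ u₃ : V} {a b c : W}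

lemma hv1 (C : Config φ v u₁ u₂ u₃ a b c) : v ≠ u₁ := ((G.mem_edgeSet).1 C.he₁).ne
lemma hv2 (C : Config φ v u₁ u₂ u₃ a b c) : v ≠ u₂ := ((G.mem_edgeSet).1 C.he₂).ne
lemma hv3 (C : Config φ v u₁ u₂ u₃ a b c) : v ≠ u₃ := ((G.mem_edgeSet).1 C.he₃).ne

/-- swap slots 1 and 2 -/
lemma swap12 (C : Config φ v u₁ u₂ u₃ a b c) : Config φ v u₂ u₁ u₃ c b a :=
  ⟨C.he₂, C.he₁, C.he₃, C.hu12.symm, C.hu23, C.hu13, C.hbc.symm, C.hac.symm, C.hab.symm,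
    C.ht₂.trans Sym2.eq_swap, C.ht₁.trans Sym2.eq_swap, C.ht₃.trans Sym2.eq_swap⟩

/-- swap slots 2 and 3 -/
lemma swap23 (C : Config φ v u₁ u₂ u₃ a b c) : Config φ v u₁ u₃ u₂ b a c :=
  ⟨C.he₁, C.he₃, C.he₂, C.hu13, C.hu12, C.hu23.symm, C.hab.symm, C.hbc, C.hac,
    C.ht₁.trans Sym2.eq_swap, C.ht₃, C.ht₂⟩

/-- rotate slots (1,2,3) → (2,3,1) -/
lemma rot (C : Config φ v u₁ u₂ u₃ a b c) : Config φ v u₂ u₃ u₁ b c a :=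
  (C.swap12).swap23

/-- every edge through `v` is one of the three star edges -/
lemma classify_v (C : Config φ v u₁ u₂ u₃ a b c) (f : G.edgeSet) (hvf : v ∈ (f : Sym2 V)) :
    (f : Sym2 V) = s(v, u₁) ∨ (f : Sym2 V) = s(v, u₂) ∨ (f : Sym2 V) = s(v, u₃) := by
  set e₁ : G.edgeSet := ⟨s(v, u₁), C.he₁⟩ with he₁d
  set e₂ : G.edgeSet := ⟨s(v, u₂), C.he₂⟩ with he₂d
  set e₃ : G.edgeSet := ⟨s(v, u₃), C.he₃⟩ with he₃d
  by_cases h1 : f = e₁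
  · exact Or.inl (by rw [h1])
  by_cases h2 : f = e₂
  · exact Or.inr (Or.inl (by rw [h2]))
  by_cases h3 : f = e₃
  · exact Or.inr (Or.inr (by rw [h3]))
  exfalso
  obtain ⟨hne1, x₁, hx₁f, hx₁⟩ := phi_adj φ h1 hvf (Sym2.mem_mk_left v u₁)
  obtain ⟨hne2, x₂, hx₂f, hx₂⟩ := phi_adj φ h2 hvf (Sym2.mem_mk_left v u₂)
  obtain ⟨hne3, x₃, hx₃f, hx₃⟩ := phi_adj φ h3 hvf (Sym2.mem_mk_left v u₃)
  rw [C.ht₁, Sym2.mem_iff] at hx₁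
  rw [C.ht₂, Sym2.mem_iff] at hx₂
  rw [C.ht₃, Sym2.mem_iff] at hx₃
  -- in every case two distinct letters lie in φ f, forcing φ f to be one of the triangle edges
  have finish : ∀ {p q : W} (hpq : p ≠ q), p ∈ (↑(φ f) : Sym2 W) → q ∈ (↑(φ f) : Sym2 W) →
      (↑(φ f) : Sym2 W) = s(p, q) := fun hpq hp hq => eq_sym2_of_mem hpq hp hq
  have inj : ∀ {g : G.edgeSet}, (↑(φ f) : Sym2 W) = (↑(φ g) : Sym2 W) → f = g :=
    fun h => φ.toEquiv.injective (Subtype.ext h)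
  rcases hx₁ with rfl | rfl <;> rcases hx₂ with h₂ | h₂
  · -- x₁ = a, x₂ = b
    exact h1 (inj (by rw [C.ht₁]; exact finish C.hab hx₁f (h₂ ▸ hx₂f)))
  · -- x₁ = a, x₂ = c
    exact h3 (inj (by rw [C.ht₃]; exact finish C.hac hx₁f (h₂ ▸ hx₂f)))
  · -- x₁ = b, x₂ = b : use x₃ ∈ {a, c}
    rcases hx₃ with h₃ | h₃
    · exact h1 (inj (by rw [C.ht₁]; exact finish C.hab (h₃ ▸ hx₃f) hx₁f))
    · exact h2 (inj (by rw [C.ht₂]; exact finish C.hbc hx₁f (h₃ ▸ hx₃f)))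
  · -- x₁ = b, x₂ = c
    exact h2 (inj (by rw [C.ht₂]; exact finish C.hbc hx₁f (h₂ ▸ hx₂f)))

/-- every edge through `u₁` is `e₁` or joins `u₁` to `u₂` or `u₃` -/
lemma classify_u1 (C : Config φ v u₁ u₂ u₃ a b c) (f : G.edgeSet) (huf : u₁ ∈ (f : Sym2 V)) :
    (f : Sym2 V) = s(v, u₁) ∨ (f : Sym2 V) = s(u₁, u₂) ∨ (f : Sym2 V) = s(u₁, u₃) := by
  by_cases hvf : v ∈ (f : Sym2 V)
  · rcases C.classify_v f hvf with h | h | h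
    · exact Or.inl h
    · rw [h, Sym2.mem_iff] at huf
      rcases huf with h' | h'
      · exact absurd h'.symm C.hv1
      · exact absurd h' C.hu12
    · rw [h, Sym2.mem_iff] at huf
      rcases huf with h' | h'
      · exact absurd h'.symm C.hv1
      · exact absurd h' C.hu13
  obtain ⟨w, hwu, hwf, hf⟩ := mem_other huf
  have hwv : w ≠ v := fun h => hvf (h ▸ hwf)
  by_cases hw2 : w = u₂
  · exact Or.inr (Or.inl (by rw [hf, hw2]))
  by_cases hw3 : w = u₃
  · exact Or.inr (Or.inr (by rw [hf, hw3]))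
  exfalso
  set e₁ : G.edgeSet := ⟨s(v, u₁), C.he₁⟩
  set e₂ : G.edgeSet := ⟨s(v, u₂), C.he₂⟩
  set e₃ : G.edgeSet := ⟨s(v, u₃), C.he₃⟩
  have hfe₁ : f ≠ e₁ := fun h => hvf (by rw [h]; exact Sym2.mem_mk_left v u₁)
  have hfe₂ : f ≠ e₂ := fun h => hvf (by rw [h]; exact Sym2.mem_mk_left v u₂)
  have hfe₃ : f ≠ e₃ := fun h => hvf (by rw [h]; exact Sym2.mem_mk_left v u₃)
  obtain ⟨hne1, x₁, hx₁f, hx₁⟩ := phi_adj φ hfe₁ huf (Sym2.mem_mk_right v u₁)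
  have hnadj2 : ¬ ∃ y, y ∈ (↑(φ f) : Sym2 W) ∧ y ∈ (↑(φ e₂) : Sym2 W) := by
    apply phi_nadj φ hfe₂
    rw [hf]
    rintro ⟨y, hy1, hy2⟩
    rw [Sym2.mem_iff] at hy1 hy2
    rcases hy1 with rfl | rfl <;> rcases hy2 with h | h
    · exact C.hv1 h.symm
    · exact C.hu12 h
    · exact hwv h
    · exact hw2 h
  have hnadj3 : ¬ ∃ y, y ∈ (↑(φ f) : Sym2 W) ∧ y ∈ (↑(φ e₃) : Sym2 W) := by
    apply phi_nadj φ hfe₃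
    rw [hf]
    rintro ⟨y, hy1, hy2⟩
    rw [Sym2.mem_iff] at hy1 hy2
    rcases hy1 with rfl | rfl <;> rcases hy2 with h | h
    · exact C.hv1 h.symm
    · exact C.hu13 h
    · exact hwv h
    · exact hw3 h
  rw [C.ht₁, Sym2.mem_iff] at hx₁
  rcases hx₁ with rfl | rfl
  · exact hnadj3 ⟨x₁, hx₁f, by rw [C.ht₃]; exact Sym2.mem_mk_left x₁ c⟩
  · exact hnadj2 ⟨x₁, hx₁f, by rw [C.ht₂]; exact Sym2.mem_mk_left x₁ c⟩

/-- all vertices lie in `{v, u₁, u₂, u₃}` -/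
lemma verts (C : Config φ v u₁ u₂ u₃ a b c) (hG : G.Connected) :
    ∀ x : V, x = v ∨ x = u₁ ∨ x = u₂ ∨ x = u₃ := by
  have hcl := closure hG {x | x = v ∨ x = u₁ ∨ x = u₂ ∨ x = u₃} ?_ (Or.inl rfl : v = v ∨ _)
  · exact hcl
  intro x y hxy hx
  have hy : y ∈ ((⟨s(x, y), hxy⟩ : G.edgeSet) : Sym2 V) := Sym2.mem_mk_right x y
  have hx' : x ∈ ((⟨s(x, y), hxy⟩ : G.edgeSet) : Sym2 V) := Sym2.mem_mk_left x y
  have hmem : ∀ (f : G.edgeSet), x ∈ (f : Sym2 V) →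
      (f : Sym2 V) = s(v, u₁) ∨ (f : Sym2 V) = s(v, u₂) ∨ (f : Sym2 V) = s(v, u₃) ∨
      (f : Sym2 V) = s(u₁, u₂) ∨ (f : Sym2 V) = s(u₁, u₃) ∨ (f : Sym2 V) = s(u₂, u₃) := by
    intro f hxf
    rcases hx with rfl | rfl | rfl | rfl
    · rcases C.classify_v f hxf with h | h | h <;> tauto
    · rcases C.classify_u1 f hxf with h | h | h <;> tauto
    · rcases (C.rot).classify_u1 f hxf with h | h | h
      · exact Or.inr (Or.inl h)
      · exact Or.inr (Or.inr (Or.inr (Or.inr (Or.inr h))))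
      · exact Or.inr (Or.inr (Or.inr (Or.inl (h.trans Sym2.eq_swap))))
    · rcases (C.rot.rot).classify_u1 f hxf with h | h | h
      · exact Or.inr (Or.inr (Or.inl h))
      · exact Or.inr (Or.inr (Or.inr (Or.inr (Or.inl (h.trans Sym2.eq_swap)))))
      · exact Or.inr (Or.inr (Or.inr (Or.inr (Or.inr (h.trans Sym2.eq_swap)))))
  have hy' : y ∈ s(x, y) := Sym2.mem_mk_right x y
  rcases hmem ⟨s(x, y), hxy⟩ hx' with h | h | h | h | h | h <;>
    · rw [show ((⟨s(x,y), hxy⟩ : G.edgeSet) : Sym2 V) = s(x,y) from rfl] at h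
      rw [h, Sym2.mem_iff] at hy'
      tauto

/-- classification of all edges -/
lemma classify (C : Config φ v u₁ u₂ u₃ a b c) (hG : G.Connected) (f : G.edgeSet) :
    (f : Sym2 V) = s(v, u₁) ∨ (f : Sym2 V) = s(v, u₂) ∨ (f : Sym2 V) = s(v, u₃) ∨
    (f : Sym2 V) = s(u₁, u₂) ∨ (f : Sym2 V) = s(u₁, u₃) ∨ (f : Sym2 V) = s(u₂, u₃) := by
  obtain ⟨x, hx⟩ := exists_mem_sym2 (f : Sym2 V)
  rcases C.verts hG x with rfl | rfl | rfl | rfl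
  · rcases C.classify_v f hx with h | h | h <;> tauto
  · rcases C.classify_u1 f hx with h | h | h <;> tauto
  · rcases (C.rot).classify_u1 f hx with h | h | h
    · exact Or.inr (Or.inl h)
    · exact Or.inr (Or.inr (Or.inr (Or.inr (Or.inr h))))
    · exact Or.inr (Or.inr (Or.inr (Or.inl (h.trans Sym2.eq_swap))))
  · rcases (C.rot.rot).classify_u1 f hx with h | h | h
    · exact Or.inr (Or.inr (Or.inl h))
    · exact Or.inr (Or.inr (Or.inr (Or.inr (Or.inl (h.trans Sym2.eq_swap)))))
    · exact Or.inr (Or.inr (Or.inr (Or.inr (Or.inr (h.trans Sym2.eq_swap)))))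

end Config
end Part3

section Part4
variable {V W : Type*} {G : SimpleGraph V} {H : SimpleGraph W}

namespace Config

variable {φ : G.lineGraph ≃g H.lineGraph} {v u₁ u₂ u₃ : V} {a b c : W}

lemma sym2_ne_of (p q r s : V) (h : ¬ ((p = r ∧ q = s) ∨ (p = s ∧ q = r))) :
    s(p, q) ≠ s(r, s) := fun hc => h (Sym2.eq_iff.1 hc)

set_option maxHeartbeats 2000000 in
set_option maxRecDepth 40000 in
lemma iso_of_extra (C : Config φ v u₁ u₂ u₃ a b c) (hG : G.Connected) (hH : H.Connected)
    (h12 : s(u₁, u₂) ∈ G.edgeSet) : Nonempty (G ≃g H) := by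
  classical
  have n1 : v ≠ u₁ := C.hv1
  have n2 : v ≠ u₂ := C.hv2
  have n3 : v ≠ u₃ := C.hv3
  have hu12 := C.hu12
  have hu13 := C.hu13
  have hu23 := C.hu23
  have hab := C.hab
  have hac := C.hac
  have hbc := C.hbc
  set e₁ : G.edgeSet := ⟨s(v, u₁), C.he₁⟩ with he₁d
  set e₂ : G.edgeSet := ⟨s(v, u₂), C.he₂⟩ with he₂d
  set e₃ : G.edgeSet := ⟨s(v, u₃), C.he₃⟩ with he₃d
  set f₁₂ : G.edgeSet := ⟨s(u₁, u₂), h12⟩ with hf₁₂d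
  have hne1 : f₁₂ ≠ e₁ := fun h => by
    have := congrArg Subtype.val h
    rw [Sym2.eq_iff] at this
    tauto
  have hne2 : f₁₂ ≠ e₂ := fun h => by
    have := congrArg Subtype.val h
    rw [Sym2.eq_iff] at this
    tauto
  have hne3 : f₁₂ ≠ e₃ := fun h => by
    have := congrArg Subtype.val h
    rw [Sym2.eq_iff] at this
    tauto
  -- φ f₁₂ analysis
  obtain ⟨-, x₁, hx₁f, hx₁⟩ := phi_adj φ hne1 (Sym2.mem_mk_left u₁ u₂) (Sym2.mem_mk_right v u₁)
  have hnadj3 : ¬ ∃ y, y ∈ (↑(φ f₁₂) : Sym2 W) ∧ y ∈ (↑(φ e₃) : Sym2 W) := by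
    apply phi_nadj φ hne3
    rintro ⟨y, hy1, hy2⟩
    rw [show (f₁₂ : Sym2 V) = s(u₁, u₂) from rfl, Sym2.mem_iff] at hy1
    rw [show (e₃ : Sym2 V) = s(v, u₃) from rfl, Sym2.mem_iff] at hy2
    rcases hy1 with rfl | rfl <;> rcases hy2 with h | h <;> tauto
  have hanot : a ∉ (↑(φ f₁₂) : Sym2 W) := fun h =>
    hnadj3 ⟨a, h, by rw [C.ht₃]; exact Sym2.mem_mk_left a c⟩
  have hcnot : c ∉ (↑(φ f₁₂) : Sym2 W) := fun h =>
    hnadj3 ⟨c, h, by rw [C.ht₃]; exact Sym2.mem_mk_right a c⟩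
  have hbf : b ∈ (↑(φ f₁₂) : Sym2 W) := by
    rw [C.ht₁, Sym2.mem_iff] at hx₁
    rcases hx₁ with rfl | rfl
    · exact absurd hx₁f hanot
    · exact hx₁f
  obtain ⟨z, hzb, hzf, hfz⟩ := mem_other hbf
  have hza : z ≠ a := fun h => hanot (h ▸ hzf)
  have hzc : z ≠ c := fun h => hcnot (h ▸ hzf)
  -- image of s(u₁,u₃) if present
  have himg13 : ∀ (h13 : s(u₁, u₃) ∈ G.edgeSet),
      (↑(φ ⟨s(u₁, u₃), h13⟩) : Sym2 W) = s(a, z) := by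
    intro h13
    set f₁₃ : G.edgeSet := ⟨s(u₁, u₃), h13⟩ with hf₁₃d
    have hne1' : f₁₃ ≠ e₁ := fun h => by
      have := congrArg Subtype.val h; rw [Sym2.eq_iff] at this; tauto
    have hnef : f₁₃ ≠ f₁₂ := fun h => by
      have := congrArg Subtype.val h; rw [Sym2.eq_iff] at this; tauto
    have hnadj2 : ¬ ∃ y, y ∈ (↑(φ f₁₃) : Sym2 W) ∧ y ∈ (↑(φ e₂) : Sym2 W) := by
      apply phi_nadj φ (fun h => by
        have := congrArg Subtype.val h; rw [Sym2.eq_iff] at this; tauto)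
      rintro ⟨y, hy1, hy2⟩
      rw [show (f₁₃ : Sym2 V) = s(u₁, u₃) from rfl, Sym2.mem_iff] at hy1
      rw [show (e₂ : Sym2 V) = s(v, u₂) from rfl, Sym2.mem_iff] at hy2
      rcases hy1 with rfl | rfl <;> rcases hy2 with h | h <;> tauto
    have hbnot : b ∉ (↑(φ f₁₃) : Sym2 W) := fun h =>
      hnadj2 ⟨b, h, by rw [C.ht₂]; exact Sym2.mem_mk_left b c⟩
    obtain ⟨-, y₁, hy₁f, hy₁⟩ :=
      phi_adj φ hne1' (Sym2.mem_mk_left u₁ u₃) (Sym2.mem_mk_right v u₁)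
    have hamem : a ∈ (↑(φ f₁₃) : Sym2 W) := by
      rw [C.ht₁, Sym2.mem_iff] at hy₁
      rcases hy₁ with rfl | rfl
      · exact hy₁f
      · exact absurd hy₁f hbnot
    obtain ⟨-, y₂, hy₂f, hy₂⟩ :=
      phi_adj φ hnef (Sym2.mem_mk_left u₁ u₃) (Sym2.mem_mk_left u₁ u₂)
    have hzmem : z ∈ (↑(φ f₁₃) : Sym2 W) := by
      rw [hfz, Sym2.mem_iff] at hy₂
      rcases hy₂ with rfl | rfl
      · exact absurd hy₂f hbnot
      · exact hy₂f
    exact eq_sym2_of_mem (fun h => hza h.symm) hamem hzmem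
  -- image of s(u₂,u₃) if present
  have himg23 : ∀ (h23 : s(u₂, u₃) ∈ G.edgeSet),
      (↑(φ ⟨s(u₂, u₃), h23⟩) : Sym2 W) = s(c, z) := by
    intro h23
    set f₂₃ : G.edgeSet := ⟨s(u₂, u₃), h23⟩ with hf₂₃d
    have hne2' : f₂₃ ≠ e₂ := fun h => by
      have := congrArg Subtype.val h; rw [Sym2.eq_iff] at this; tauto
    have hnef : f₂₃ ≠ f₁₂ := fun h => by
      have := congrArg Subtype.val h; rw [Sym2.eq_iff] at this; tauto
    have hnadj1 : ¬ ∃ y, y ∈ (↑(φ f₂₃) : Sym2 W) ∧ y ∈ (↑(φ e₁) : Sym2 W) := by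
      apply phi_nadj φ (fun h => by
        have := congrArg Subtype.val h; rw [Sym2.eq_iff] at this; tauto)
      rintro ⟨y, hy1, hy2⟩
      rw [show (f₂₃ : Sym2 V) = s(u₂, u₃) from rfl, Sym2.mem_iff] at hy1
      rw [show (e₁ : Sym2 V) = s(v, u₁) from rfl, Sym2.mem_iff] at hy2
      rcases hy1 with rfl | rfl <;> rcases hy2 with h | h <;> tauto
    have hbnot : b ∉ (↑(φ f₂₃) : Sym2 W) := fun h =>
      hnadj1 ⟨b, h, by rw [C.ht₁]; exact Sym2.mem_mk_right a b⟩
    obtain ⟨-, y₁, hy₁f, hy₁⟩ :=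
      phi_adj φ hne2' (Sym2.mem_mk_left u₂ u₃) (Sym2.mem_mk_right v u₂)
    have hcmem : c ∈ (↑(φ f₂₃) : Sym2 W) := by
      rw [C.ht₂, Sym2.mem_iff] at hy₁
      rcases hy₁ with rfl | rfl
      · exact absurd hy₁f hbnot
      · exact hy₁f
    obtain ⟨-, y₂, hy₂f, hy₂⟩ :=
      phi_adj φ hnef (Sym2.mem_mk_left u₂ u₃) (Sym2.mem_mk_right u₁ u₂)
    have hzmem : z ∈ (↑(φ f₂₃) : Sym2 W) := by
      rw [hfz, Sym2.mem_iff] at hy₂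
      rcases hy₂ with rfl | rfl
      · exact absurd hy₂f hbnot
      · exact hy₂f
    exact eq_sym2_of_mem (fun h => hzc h.symm) hcmem hzmem
  -- all images
  have himgAll : ∀ f : G.edgeSet, (↑(φ f) : Sym2 W) = s(a, b) ∨ (↑(φ f) : Sym2 W) = s(b, c) ∨
      (↑(φ f) : Sym2 W) = s(a, c) ∨ (↑(φ f) : Sym2 W) = s(b, z) ∨
      (↑(φ f) : Sym2 W) = s(a, z) ∨ (↑(φ f) : Sym2 W) = s(c, z) := by
    intro f
    rcases C.classify hG f with h | h | h | h | h | h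
    · exact Or.inl (by rw [show f = e₁ from Subtype.ext h]; exact C.ht₁)
    · exact Or.inr (Or.inl (by rw [show f = e₂ from Subtype.ext h]; exact C.ht₂))
    · exact Or.inr (Or.inr (Or.inl (by rw [show f = e₃ from Subtype.ext h]; exact C.ht₃)))
    · exact Or.inr (Or.inr (Or.inr (Or.inl (by
        rw [show f = f₁₂ from Subtype.ext h]; exact hfz))))
    · refine Or.inr (Or.inr (Or.inr (Or.inr (Or.inl ?_))))
      have hmem : s(u₁, u₃) ∈ G.edgeSet := h ▸ f.2
      rw [show f = ⟨s(u₁, u₃), hmem⟩ from Subtype.ext h]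
      exact himg13 hmem
    · refine Or.inr (Or.inr (Or.inr (Or.inr (Or.inr ?_))))
      have hmem : s(u₂, u₃) ∈ G.edgeSet := h ▸ f.2
      rw [show f = ⟨s(u₂, u₃), hmem⟩ from Subtype.ext h]
      exact himg23 hmem
  -- vertices of H
  have hWverts : ∀ y : W, y = a ∨ y = b ∨ y = c ∨ y = z := by
    have hcl := closure hH {y | y = a ∨ y = b ∨ y = c ∨ y = z} ?_
      (Or.inr (Or.inl rfl) : b ∈ {y | y = a ∨ y = b ∨ y = c ∨ y = z})
    · exact hcl
    intro x y hxy hx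
    have happ : (↑(φ (φ.symm ⟨s(x, y), hxy⟩)) : Sym2 W) = s(x, y) := by
      rw [RelIso.apply_symm_apply]
    have hy : y ∈ s(x, y) := Sym2.mem_mk_right x y
    simp only [Set.mem_setOf_eq] at hx ⊢
    rcases himgAll (φ.symm ⟨s(x, y), hxy⟩) with h | h | h | h | h | h <;>
      · rw [happ] at h
        rw [h, Sym2.mem_iff] at hy
        tauto
  -- adjacency characterisations
  have hAdjG : ∀ x y : V, G.Adj x y ↔ (s(x, y) = s(v, u₁) ∨ s(x, y) = s(v, u₂) ∨
      s(x, y) = s(v, u₃) ∨ s(x, y) = s(u₁, u₂) ∨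
      (s(u₁, u₃) ∈ G.edgeSet ∧ s(x, y) = s(u₁, u₃)) ∨
      (s(u₂, u₃) ∈ G.edgeSet ∧ s(x, y) = s(u₂, u₃))) := by
    intro x y
    constructor
    · intro h
      rcases C.classify hG ⟨s(x, y), (G.mem_edgeSet).2 h⟩ with h' | h' | h' | h' | h' | h'
      · exact Or.inl h'
      · exact Or.inr (Or.inl h')
      · exact Or.inr (Or.inr (Or.inl h'))
      · exact Or.inr (Or.inr (Or.inr (Or.inl h')))
      · exact Or.inr (Or.inr (Or.inr (Or.inr (Or.inl ⟨h' ▸ (G.mem_edgeSet).2 h, h'⟩))))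
      · exact Or.inr (Or.inr (Or.inr (Or.inr (Or.inr ⟨h' ▸ (G.mem_edgeSet).2 h, h'⟩))))
    · intro h
      rw [← G.mem_edgeSet]
      rcases h with h | h | h | h | ⟨hm, h⟩ | ⟨hm, h⟩ <;> rw [h]
      · exact C.he₁
      · exact C.he₂
      · exact C.he₃
      · exact h12
      · exact hm
      · exact hm
  have hAdjH : ∀ x y : W, H.Adj x y ↔ (s(x, y) = s(a, b) ∨ s(x, y) = s(b, c) ∨
      s(x, y) = s(a, c) ∨ s(x, y) = s(b, z) ∨
      (s(u₁, u₃) ∈ G.edgeSet ∧ s(x, y) = s(a, z)) ∨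
      (s(u₂, u₃) ∈ G.edgeSet ∧ s(x, y) = s(c, z))) := by
    intro x y
    constructor
    · intro h
      have happ : (↑(φ (φ.symm ⟨s(x, y), (H.mem_edgeSet).2 h⟩)) : Sym2 W) = s(x, y) := by
        rw [RelIso.apply_symm_apply]
      rcases C.classify hG (φ.symm ⟨s(x, y), (H.mem_edgeSet).2 h⟩) with h' | h' | h' | h' | h' | h'
      · refine Or.inl ?_
        rw [← happ, show φ.symm ⟨s(x,y), _⟩ = e₁ from Subtype.ext h']
        exact C.ht₁
      · refine Or.inr (Or.inl ?_)
        rw [← happ, show φ.symm ⟨s(x,y), _⟩ = e₂ from Subtype.ext h']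
        exact C.ht₂
      · refine Or.inr (Or.inr (Or.inl ?_))
        rw [← happ, show φ.symm ⟨s(x,y), _⟩ = e₃ from Subtype.ext h']
        exact C.ht₃
      · refine Or.inr (Or.inr (Or.inr (Or.inl ?_)))
        rw [← happ, show φ.symm ⟨s(x,y), _⟩ = f₁₂ from Subtype.ext h']
        exact hfz
      · have hmem : s(u₁, u₃) ∈ G.edgeSet := h' ▸ (φ.symm ⟨s(x, y), (H.mem_edgeSet).2 h⟩).2
        refine Or.inr (Or.inr (Or.inr (Or.inr (Or.inl ⟨hmem, ?_⟩))))
        rw [← happ, show φ.symm ⟨s(x,y), _⟩ = ⟨s(u₁,u₃), hmem⟩ from Subtype.ext h']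
        exact himg13 hmem
      · have hmem : s(u₂, u₃) ∈ G.edgeSet := h' ▸ (φ.symm ⟨s(x, y), (H.mem_edgeSet).2 h⟩).2
        refine Or.inr (Or.inr (Or.inr (Or.inr (Or.inr ⟨hmem, ?_⟩))))
        rw [← happ, show φ.symm ⟨s(x,y), _⟩ = ⟨s(u₂,u₃), hmem⟩ from Subtype.ext h']
        exact himg23 hmem
    · intro h
      rw [← H.mem_edgeSet]
      rcases h with h | h | h | h | ⟨hm, h⟩ | ⟨hm, h⟩ <;> rw [h]
      · rw [← C.ht₁]; exact (φ e₁).2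
      · rw [← C.ht₂]; exact (φ e₂).2
      · rw [← C.ht₃]; exact (φ e₃).2
      · rw [← hfz]; exact (φ f₁₂).2
      · rw [← himg13 hm]; exact (φ _).2
      · rw [← himg23 hm]; exact (φ _).2
  obtain ⟨E, hEv, hE1, hE2, hE3⟩ : ∃ E : V ≃ W, E v = b ∧ E u₁ = a ∧ E u₂ = c ∧ E u₃ = z := by
    refine ⟨⟨fun x => if x = v then b else if x = u₁ then a else if x = u₂ then c else z,
      fun y => if y = b then v else if y = a then u₁ else if y = c then u₂ else u₃,
      ?_, ?_⟩, ?_, ?_, ?_, ?_⟩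
    · intro x
      rcases C.verts hG x with rfl | rfl | rfl | rfl <;>
        simp [n1, n2, n3, hu12, hu13, hu23, hab, hac, hbc, hza, hzb, hzc,
          n1.symm, n2.symm, n3.symm, hu12.symm, hu13.symm, hu23.symm,
          hab.symm, hac.symm, hbc.symm, hza.symm, hzb.symm, hzc.symm]
    · intro y
      rcases hWverts y with rfl | rfl | rfl | rfl <;>
        simp [n1, n2, n3, hu12, hu13, hu23, hab, hac, hbc, hza, hzb, hzc,
          n1.symm, n2.symm, n3.symm, hu12.symm, hu13.symm, hu23.symm,
          hab.symm, hac.symm, hbc.symm, hza.symm, hzb.symm, hzc.symm]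
    · simp
    · simp [n1.symm, hab.symm]
    · simp [n2.symm, hu12.symm, hbc.symm, hac]
    · simp [n3.symm, hu13.symm, hu23.symm, hzb, hza, hzc]
  refine ⟨⟨E, @fun x y => ?_⟩⟩
  rw [hAdjH, hAdjG]
  rcases C.verts hG x with rfl | rfl | rfl | rfl <;>
    rcases C.verts hG y with rfl | rfl | rfl | rfl <;>
    simp only [hEv, hE1, hE2, hE3] <;>
    simp [Sym2.eq_iff, n1, n2, n3, hu12, hu13, hu23, hab, hac, hbc, hza, hzb, hzc,
      n1.symm, n2.symm, n3.symm, hu12.symm, hu13.symm, hu23.symm,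
      hab.symm, hac.symm, hbc.symm, hza.symm, hzb.symm, hzc.symm]

end Config
end Part4

section Part5
variable {V W : Type*} {G : SimpleGraph V} {H : SimpleGraph W}

namespace Config
variable {φ : G.lineGraph ≃g H.lineGraph} {v u₁ u₂ u₃ : V} {a b c : W}

set_option maxHeartbeats 2000000 in
set_option maxRecDepth 40000 in
lemma exceptional (C : Config φ v u₁ u₂ u₃ a b c) (hG : G.Connected) (hH : H.Connected)
    (h12 : s(u₁, u₂) ∉ G.edgeSet) (h13 : s(u₁, u₃) ∉ G.edgeSet)
    (h23 : s(u₂, u₃) ∉ G.edgeSet) :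
    Nonempty (G ≃g completeBipartiteGraph (Fin 1) (Fin 3)) ∧
      Nonempty (H ≃g completeGraph (Fin 3)) := by
  classical
  have n1 : v ≠ u₁ := C.hv1
  have n2 : v ≠ u₂ := C.hv2
  have n3 : v ≠ u₃ := C.hv3
  have hu12 := C.hu12
  have hu13 := C.hu13
  have hu23 := C.hu23
  have hab := C.hab
  have hac := C.hac
  have hbc := C.hbc
  set e₁ : G.edgeSet := ⟨s(v, u₁), C.he₁⟩ with he₁d
  set e₂ : G.edgeSet := ⟨s(v, u₂), C.he₂⟩ with he₂d
  set e₃ : G.edgeSet := ⟨s(v, u₃), C.he₃⟩ with he₃d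
  have hclass : ∀ f : G.edgeSet, (f : Sym2 V) = s(v, u₁) ∨ (f : Sym2 V) = s(v, u₂) ∨
      (f : Sym2 V) = s(v, u₃) := by
    intro f
    rcases C.classify hG f with h | h | h | h | h | h
    · exact Or.inl h
    · exact Or.inr (Or.inl h)
    · exact Or.inr (Or.inr h)
    · exact absurd (h ▸ f.2) h12
    · exact absurd (h ▸ f.2) h13
    · exact absurd (h ▸ f.2) h23
  have hAdjG : ∀ x y : V, G.Adj x y ↔ (s(x, y) = s(v, u₁) ∨ s(x, y) = s(v, u₂) ∨
      s(x, y) = s(v, u₃)) := by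
    intro x y
    constructor
    · intro h
      exact hclass ⟨s(x, y), (G.mem_edgeSet).2 h⟩
    · intro h
      rw [← G.mem_edgeSet]
      rcases h with h | h | h <;> rw [h]
      · exact C.he₁
      · exact C.he₂
      · exact C.he₃
  have himgAll : ∀ f : G.edgeSet, (↑(φ f) : Sym2 W) = s(a, b) ∨ (↑(φ f) : Sym2 W) = s(b, c) ∨
      (↑(φ f) : Sym2 W) = s(a, c) := by
    intro f
    rcases hclass f with h | h | h
    · exact Or.inl (by rw [show f = e₁ from Subtype.ext h]; exact C.ht₁)
    · exact Or.inr (Or.inl (by rw [show f = e₂ from Subtype.ext h]; exact C.ht₂))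
    · exact Or.inr (Or.inr (by rw [show f = e₃ from Subtype.ext h]; exact C.ht₃))
  have hWverts : ∀ y : W, y = a ∨ y = b ∨ y = c := by
    have hcl := closure hH {y | y = a ∨ y = b ∨ y = c} ?_
      (Or.inl rfl : a ∈ {y | y = a ∨ y = b ∨ y = c})
    · exact hcl
    intro x y hxy hx
    have happ : (↑(φ (φ.symm ⟨s(x, y), hxy⟩)) : Sym2 W) = s(x, y) := by
      rw [RelIso.apply_symm_apply]
    have hy : y ∈ s(x, y) := Sym2.mem_mk_right x y
    simp only [Set.mem_setOf_eq] at hx ⊢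
    rcases himgAll (φ.symm ⟨s(x, y), hxy⟩) with h | h | h <;>
      · rw [happ] at h
        rw [h, Sym2.mem_iff] at hy
        tauto
  have hAdjH : ∀ x y : W, H.Adj x y ↔ (s(x, y) = s(a, b) ∨ s(x, y) = s(b, c) ∨
      s(x, y) = s(a, c)) := by
    intro x y
    constructor
    · intro h
      have happ : (↑(φ (φ.symm ⟨s(x, y), (H.mem_edgeSet).2 h⟩)) : Sym2 W) = s(x, y) := by
        rw [RelIso.apply_symm_apply]
      rcases himgAll (φ.symm ⟨s(x, y), (H.mem_edgeSet).2 h⟩) with h' | h' | h' <;>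
        rw [happ] at h' <;> tauto
    · intro h
      rw [← H.mem_edgeSet]
      rcases h with h | h | h <;> rw [h]
      · rw [← C.ht₁]; exact (φ e₁).2
      · rw [← C.ht₂]; exact (φ e₂).2
      · rw [← C.ht₃]; exact (φ e₃).2
  constructor
  · -- G ≅ K₁,₃
    obtain ⟨E, hEv, hE1, hE2, hE3⟩ : ∃ E : V ≃ (Fin 1 ⊕ Fin 3), E v = Sum.inl 0 ∧
        E u₁ = Sum.inr 0 ∧ E u₂ = Sum.inr 1 ∧ E u₃ = Sum.inr 2 := by
      refine ⟨⟨fun x => if x = v then Sum.inl 0 else if x = u₁ then Sum.inr 0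
          else if x = u₂ then Sum.inr 1 else Sum.inr 2,
        Sum.elim (fun _ => v) (fun i => if i = 0 then u₁ else if i = 1 then u₂ else u₃),
        ?_, ?_⟩, ?_, ?_, ?_, ?_⟩
      · intro x
        rcases C.verts hG x with rfl | rfl | rfl | rfl <;>
          simp [n1.symm, n2.symm, n3.symm, hu12.symm, hu13.symm, hu23.symm]
      · rintro (i | i)
        · simp [Fin.fin_one_eq_zero i]
        · fin_cases i <;> simp [n1.symm, n2.symm, n3.symm, hu12.symm, hu13.symm, hu23.symm]
      · simp
      · simp [n1.symm]
      · simp [n2.symm, hu12.symm]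
      · simp [n3.symm, hu13.symm, hu23.symm]
    refine ⟨⟨E, @fun x y => ?_⟩⟩
    rw [hAdjG]
    rcases C.verts hG x with rfl | rfl | rfl | rfl <;>
      rcases C.verts hG y with rfl | rfl | rfl | rfl <;>
      simp only [hEv, hE1, hE2, hE3] <;>
      simp [completeBipartiteGraph, Sym2.eq_iff, n1, n2, n3, hu12, hu13, hu23,
        n1.symm, n2.symm, n3.symm, hu12.symm, hu13.symm, hu23.symm]
  · -- H ≅ K₃
    obtain ⟨E, hEa, hEb, hEc⟩ : ∃ E : W ≃ Fin 3, E a = 0 ∧ E b = 1 ∧ E c = 2 := by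
      refine ⟨⟨fun y => if y = a then 0 else if y = b then 1 else 2,
        fun i => if i = 0 then a else if i = 1 then b else c, ?_, ?_⟩, ?_, ?_, ?_⟩
      · intro y
        rcases hWverts y with rfl | rfl | rfl <;>
          simp [hab.symm, hac.symm, hbc.symm]
      · intro i
        fin_cases i <;> simp [hab.symm, hac.symm, hbc.symm]
      · simp
      · simp [hab.symm]
      · simp [hac.symm, hbc.symm]
    refine ⟨⟨E, @fun x y => ?_⟩⟩
    rw [hAdjH]
    rcases hWverts x with rfl | rfl | rfl <;>
      rcases hWverts y with rfl | rfl | rfl <;>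
      simp only [hEa, hEb, hEc] <;>
      simp [completeGraph, Sym2.eq_iff, hab, hac, hbc, hab.symm, hac.symm, hbc.symm]

end Config
end Part5

section Part6
variable {V W : Type*} {G : SimpleGraph V} {H : SimpleGraph W}

lemma of_starTri (φ : G.lineGraph ≃g H.lineGraph) (hG : G.Connected) (hH : H.Connected)
    (h : StarTri φ) :
    Nonempty (G ≃g H) ∨
      (Nonempty (G ≃g completeBipartiteGraph (Fin 1) (Fin 3)) ∧
        Nonempty (H ≃g completeGraph (Fin 3))) := by
  obtain ⟨v, E₁, E₂, E₃, hv1, hv2, hv3, h12, h13, h23, hno⟩ := h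
  obtain ⟨u₁, hu1v, hu1m, hE₁⟩ := mem_other hv1
  obtain ⟨u₂, hu2v, hu2m, hE₂⟩ := mem_other hv2
  obtain ⟨u₃, hu3v, hu3m, hE₃⟩ := mem_other hv3
  have hu12 : u₁ ≠ u₂ := fun h => h12 (Subtype.ext (hE₁.trans (h ▸ hE₂.symm)))
  have hu13 : u₁ ≠ u₃ := fun h => h13 (Subtype.ext (hE₁.trans (h ▸ hE₃.symm)))
  have hu23 : u₂ ≠ u₃ := fun h => h23 (Subtype.ext (hE₂.trans (h ▸ hE₃.symm)))
  obtain ⟨hn12, b, hb1, hb2⟩ := phi_adj φ h12 hv1 hv2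
  obtain ⟨hn13, a, ha1, ha3⟩ := phi_adj φ h13 hv1 hv3
  obtain ⟨hn23, c, hc2, hc3⟩ := phi_adj φ h23 hv2 hv3
  have hab : a ≠ b := fun h => hno ⟨a, ha1, h ▸ hb2, ha3⟩
  have hac : a ≠ c := fun h => hno ⟨a, ha1, h ▸ hc2, ha3⟩
  have hbc : b ≠ c := fun h => hno ⟨b, hb1, hb2, h ▸ hc3⟩
  have ht₁ : (↑(φ E₁) : Sym2 W) = s(a, b) := eq_sym2_of_mem hab ha1 hb1
  have ht₂ : (↑(φ E₂) : Sym2 W) = s(b, c) := eq_sym2_of_mem hbc hb2 hc2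
  have ht₃ : (↑(φ E₃) : Sym2 W) = s(a, c) := eq_sym2_of_mem hac ha3 hc3
  have he₁ : s(v, u₁) ∈ G.edgeSet := hE₁ ▸ E₁.2
  have he₂ : s(v, u₂) ∈ G.edgeSet := hE₂ ▸ E₂.2
  have he₃ : s(v, u₃) ∈ G.edgeSet := hE₃ ▸ E₃.2
  have hC : Config φ v u₁ u₂ u₃ a b c :=
    ⟨he₁, he₂, he₃, hu12, hu13, hu23, hab, hac, hbc,
      by rw [show (⟨s(v, u₁), he₁⟩ : G.edgeSet) = E₁ from Subtype.ext hE₁.symm]; exact ht₁,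
      by rw [show (⟨s(v, u₂), he₂⟩ : G.edgeSet) = E₂ from Subtype.ext hE₂.symm]; exact ht₂,
      by rw [show (⟨s(v, u₃), he₃⟩ : G.edgeSet) = E₃ from Subtype.ext hE₃.symm]; exact ht₃⟩
  by_cases g12 : s(u₁, u₂) ∈ G.edgeSet
  · exact Or.inl (hC.iso_of_extra hG hH g12)
  by_cases g13 : s(u₁, u₃) ∈ G.edgeSet
  · exact Or.inl ((hC.swap23).iso_of_extra hG hH g13)
  by_cases g23 : s(u₂, u₃) ∈ G.edgeSet
  · exact Or.inl ((hC.rot).iso_of_extra hG hH g23)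
  · exact Or.inr (hC.exceptional hG hH g12 g13 g23)

lemma iso_of_no_edges (hG : G.Connected) (hH : H.Connected) (hGe : IsEmpty G.edgeSet)
    (hHe : IsEmpty H.edgeSet) : Nonempty (G ≃g H) := by
  have hsubV : ∀ x y : V, x = y := by
    intro x y
    obtain ⟨p⟩ := hG.preconnected x y
    cases p with
    | nil => rfl
    | cons h q => exact (hGe.false ⟨_, (G.mem_edgeSet).2 h⟩).elim
  have hsubW : ∀ x y : W, x = y := by
    intro x y
    obtain ⟨p⟩ := hH.preconnected x y
    cases p with
    | nil => rfl
    | cons h q => exact (hHe.false ⟨_, (H.mem_edgeSet).2 h⟩).elim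
  obtain ⟨v0⟩ := hG.nonempty
  obtain ⟨w0⟩ := hH.nonempty
  refine ⟨⟨⟨fun _ => w0, fun _ => v0, fun x => hsubV v0 x, fun y => hsubW w0 y⟩,
    @fun x y => ?_⟩⟩
  constructor
  · intro h
    exact (hHe.false ⟨_, (H.mem_edgeSet).2 h⟩).elim
  · intro h
    exact (hGe.false ⟨_, (G.mem_edgeSet).2 h⟩).elim

lemma iso_of_one_edge (φ : G.lineGraph ≃g H.lineGraph) (hG : G.Connected) (hH : H.Connected)
    (h1 : ∀ e f : G.edgeSet, e = f) (e0 : G.edgeSet) : Nonempty (G ≃g H) := by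
  classical
  obtain ⟨p, hp⟩ := exists_mem_sym2 (e0 : Sym2 V)
  obtain ⟨q, hqp, hq, he0⟩ := mem_other hp
  have hVG : ∀ x, x = p ∨ x = q := by
    have hcl := closure hG {x | x = p ∨ x = q} ?_ (Or.inl rfl : p ∈ {x | x = p ∨ x = q})
    · exact hcl
    intro x y hxy hx
    have : (⟨s(x, y), hxy⟩ : G.edgeSet) = e0 := h1 _ _
    have h' : s(x, y) = s(p, q) := (congrArg Subtype.val this).trans he0
    have hy : y ∈ s(x, y) := Sym2.mem_mk_right x y
    rw [h', Sym2.mem_iff] at hy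
    simp only [Set.mem_setOf_eq]
    tauto
  have hAdjG : ∀ x y, G.Adj x y ↔ s(x, y) = s(p, q) := by
    intro x y
    constructor
    · intro h
      exact (congrArg Subtype.val (h1 ⟨s(x, y), (G.mem_edgeSet).2 h⟩ e0)).trans he0
    · intro h
      rw [← G.mem_edgeSet, h, ← he0]
      exact e0.2
  have hH1 : ∀ h h' : H.edgeSet, h = h' := by
    intro h h'
    have := congrArg φ (h1 (φ.symm h) (φ.symm h'))
    simpa using this
  obtain ⟨r, hr⟩ := exists_mem_sym2 (↑(φ e0) : Sym2 W)
  obtain ⟨s', hsr, hs, hf0⟩ := mem_other hr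
  have hVH : ∀ y, y = r ∨ y = s' := by
    have hcl := closure hH {y | y = r ∨ y = s'} ?_ (Or.inl rfl : r ∈ {y | y = r ∨ y = s'})
    · exact hcl
    intro x y hxy hx
    have : (⟨s(x, y), hxy⟩ : H.edgeSet) = φ e0 := hH1 _ _
    have h' : s(x, y) = s(r, s') := (congrArg Subtype.val this).trans hf0
    have hy : y ∈ s(x, y) := Sym2.mem_mk_right x y
    rw [h', Sym2.mem_iff] at hy
    simp only [Set.mem_setOf_eq]
    tauto
  have hAdjH : ∀ x y, H.Adj x y ↔ s(x, y) = s(r, s') := by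
    intro x y
    constructor
    · intro h
      exact (congrArg Subtype.val (hH1 ⟨s(x, y), (H.mem_edgeSet).2 h⟩ (φ e0))).trans hf0
    · intro h
      rw [← H.mem_edgeSet, h, ← hf0]
      exact (φ e0).2
  refine ⟨⟨⟨fun x => if x = p then r else s', fun y => if y = r then p else q,
    ?_, ?_⟩, @fun x y => ?_⟩⟩
  · intro x
    rcases hVG x with rfl | rfl <;> simp [hqp, hsr]
  · intro y
    rcases hVH y with rfl | rfl <;> simp [hqp, hsr]
  · rw [hAdjH, hAdjG]
    rcases hVG x with rfl | rfl <;> rcases hVG y with rfl | rfl <;>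
      simp [Sym2.eq_iff, hqp, hsr, hqp.symm, hsr.symm]

lemma whitney_main (hG : G.Connected) (hH : H.Connected)
    (hiso : Nonempty (G.lineGraph ≃g H.lineGraph))
    (hK : ¬((Nonempty (G ≃g completeGraph (Fin 3)) ∧
              Nonempty (H ≃g completeBipartiteGraph (Fin 1) (Fin 3))) ∨
            (Nonempty (H ≃g completeGraph (Fin 3)) ∧
              Nonempty (G ≃g completeBipartiteGraph (Fin 1) (Fin 3))))) :
    Nonempty (G ≃g H) := by
  obtain ⟨φ⟩ := hiso
  by_cases h2 : ∃ e f : G.edgeSet, e ≠ f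
  · by_cases hP : StarTri φ
    · rcases of_starTri φ hG hH hP with h | ⟨hA, hB⟩
      · exact h
      · exact absurd (Or.inr ⟨hB, hA⟩) hK
    by_cases hP' : StarTri φ.symm
    · rcases of_starTri φ.symm hH hG hP' with h | ⟨hA, hB⟩
      · exact ⟨h.some.symm⟩
      · exact absurd (Or.inl ⟨hB, hA⟩) hK
    · exact part2 φ hG hH h2 hP hP'
  · push_neg at h2
    by_cases he : Nonempty G.edgeSet
    · exact iso_of_one_edge φ hG hH h2 he.some
    · have hGe : IsEmpty G.edgeSet := not_nonempty_iff.1 he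
      have hHe : IsEmpty H.edgeSet := ⟨fun h => hGe.false (φ.symm h)⟩
      exact iso_of_no_edges hG hH hGe hHe

end Part6

end WhitneyAux


open SimpleGraph

/-- Whitney's theorem: if two finite connected graphs have isomorphic line graphs, and it is
not the case that one of them is the triangle `K₃` and the other the star `K_{1,3}`, then the
graphs themselves are isomorphic. -/
theorem isomorphic_of_lineGraph_isomorphic
    {V W : Type*} [Fintype V] [DecidableEq V] [Fintype W] [DecidableEq W]
    (G : SimpleGraph V) (H : SimpleGraph W)
    (hG : G.Connected) (hH : H.Connected)
    (hiso : Nonempty (G.lineGraph ≃g H.lineGraph))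
    (hK : ¬((Nonempty (G ≃g completeGraph (Fin 3)) ∧
              Nonempty (H ≃g completeBipartiteGraph (Fin 1) (Fin 3))) ∨
            (Nonempty (H ≃g completeGraph (Fin 3)) ∧
              Nonempty (G ≃g completeBipartiteGraph (Fin 1) (Fin 3))))) :
    Nonempty (G ≃g H) := by
  exact WhitneyAux.whitney_main hG hH hiso hK
end
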